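/- Let G be a finite group, let p be a prime, and let a ∈ G be an element of order p such that the centralizer C_G(a) is a p-group. Then for every element b ≠ a in the connected component of a in the cyclic graph Δ(G), the subgroup ⟨a, b⟩ is cyclic; in particular, every element of order p lying in the connected component of a belongs to ⟨a⟩ \ {1}. -/

import Mathlib

/-- The cyclic graph `Δ(G)`: vertices are the nonidentity elements of `G`,
with distinct `x` and `y` adjacent iff `⟨x, y⟩` is cyclic. -/
def cyclicGraph (G : Type*) [Group G] : SimpleGraph {x : G // x ≠ 1} where
  Adj x y := x ≠ y ∧ IsCyclic ↥(Subgroup.closure ({(x : G), (y : G)} : Set G))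
  symm := by
    constructor
    rintro x y ⟨hne, hcyc⟩
    refine ⟨hne.symm, ?_⟩
    rwa [Set.pair_comm]
  loopless := ⟨fun x h => h.1 rfl⟩

/-- `H` is a Frobenius complement of `K` in `L` (all subgroups of an ambient group `G`):
`H ≤ L`, `H` is nontrivial, `L = KH`, `K ⊓ H = 1`, and `C_K(h) = 1` for all `1 ≠ h ∈ H`. -/
def IsFrobeniusComplementIn {G : Type*} [Group G] (K L H : Subgroup G) : Prop :=
  H ≤ L ∧ H ≠ ⊥ ∧ (∀ x ∈ L, ∃ k ∈ K, ∃ h ∈ H, x = k * h) ∧ K ⊓ H = ⊥ ∧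
    ∀ h ∈ H, h ≠ 1 → ∀ k ∈ K, Commute h k → k = 1

/-- `G` is a Frobenius group with kernel `K` and complement `H`. -/
def IsFrobenius (G : Type*) [Group G] (K H : Subgroup G) : Prop :=
  K.Normal ∧ K ≠ ⊥ ∧ IsFrobeniusComplementIn K ⊤ H

/-- `G` is a 2-Frobenius group with respect to the normal subgroups `K ≤ L`:
`L` is a Frobenius group with kernel `K` (and some complement), and `G/K` is a
Frobenius group with kernel `L/K` (and some complement). -/
def Is2Frobenius (G : Type*) [Group G] (K L : Subgroup G) [K.Normal] [L.Normal] : Prop :=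
  K ≠ ⊥ ∧ K < L ∧
    (∃ H : Subgroup G, IsFrobeniusComplementIn K L H) ∧
    (∃ C : Subgroup (G ⧸ K),
      IsFrobeniusComplementIn (L.map (QuotientGroup.mk' K)) ⊤ C)

section Aux
open Subgroup

/-- `d ^ gcd (orderOf d) j` is a power of `d ^ j`. -/
lemma pow_gcd_mem_zpowers' {G : Type*} [Group G] (d : G) (j : ℕ) :
    d ^ Nat.gcd (orderOf d) j ∈ zpowers (d ^ j) := by
  have key := congr_arg (d ^ ·) ((orderOf d).gcd_eq_gcd_ab j)
  rw [zpow_add, zpow_mul, zpow_mul, zpow_natCast, zpow_natCast, zpow_natCast,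
    pow_orderOf_eq_one, one_zpow, one_mul] at key
  rw [key]
  exact zpow_mem (mem_zpowers _) _

/-- In a cyclic `p`-group, any element of order `p` is a power of any nontrivial element. -/
lemma lemA' {G : Type*} [Group G] [Fintype G] {p k : ℕ} (hp : p.Prime) {d a y : G}
    (hd : orderOf d = p ^ k) (hay : a ∈ zpowers d) (hy : y ∈ zpowers d)
    (hao : orderOf a = p) (hy1 : y ≠ 1) : a ∈ zpowers y := by
  obtain ⟨i, rfl⟩ : ∃ i : ℕ, d ^ i = a := mem_powers_iff_mem_zpowers.mpr hay
  obtain ⟨j, rfl⟩ : ∃ j : ℕ, d ^ j = y := mem_powers_iff_mem_zpowers.mpr hy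
  rcases Nat.eq_zero_or_pos k with rfl | hk
  · rw [pow_zero, orderOf_eq_one_iff] at hd
    rw [hd, one_pow, orderOf_one] at hao
    exact absurd hao.symm hp.ne_one
  have hgi : Nat.gcd (p ^ k) i = p ^ (k - 1) := by
    have h1 : p ^ k / Nat.gcd (p ^ k) i = p := by
      rw [orderOf_pow, hd] at hao
      exact hao
    have h2 : Nat.gcd (p ^ k) i ∣ p ^ k := Nat.gcd_dvd_left _ _
    have h3 : Nat.gcd (p ^ k) i * p = p ^ k := by
      conv_rhs => rw [← Nat.mul_div_cancel' h2]
      rw [h1]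
    have h4 : p ^ (k - 1) * p = p ^ k := by
      rw [← pow_succ, Nat.sub_add_cancel hk]
    exact Nat.eq_of_mul_eq_mul_right hp.pos (h3.trans h4.symm)
  have hgj : Nat.gcd (p ^ k) j ∣ p ^ (k - 1) := by
    obtain ⟨t, ht, hteq⟩ := (Nat.dvd_prime_pow hp).mp (Nat.gcd_dvd_left (p ^ k) j)
    rcases Nat.lt_or_ge t k with htk | htk
    · exact hteq ▸ pow_dvd_pow p (Nat.le_sub_one_of_lt htk)
    · exfalso
      have h5 : p ^ t ∣ j := by
        have := Nat.gcd_dvd_right (p ^ k) j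
        rwa [hteq] at this
      have h6 : p ^ k ∣ j := (pow_dvd_pow p htk).trans h5
      exact hy1 (orderOf_dvd_iff_pow_eq_one.mp (hd ▸ h6))
  have hdvd : Nat.gcd (p ^ k) j ∣ i := hgj.trans (hgi ▸ Nat.gcd_dvd_right (p ^ k) i)
  obtain ⟨c, rfl⟩ := hdvd
  rw [pow_mul]
  exact pow_mem (hd ▸ pow_gcd_mem_zpowers' d j) c

/-- The step lemma: if `a ∈ ⟨x⟩` and `⟨x, y⟩` is cyclic with `y ≠ 1`, then `a ∈ ⟨y⟩`. -/
lemma lemStep' {G : Type*} [Group G] [Fintype G] {p : ℕ} (hp : p.Prime) {a : G}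
    (hao : orderOf a = p) (hc : IsPGroup p (Subgroup.centralizer ({a} : Set G)))
    {x y : G} (hy1 : y ≠ 1) (hax : a ∈ zpowers x)
    (hcyc : IsCyclic ↥(Subgroup.closure ({x, y} : Set G))) : a ∈ zpowers y := by
  obtain ⟨g, hg⟩ := hcyc.exists_generator
  set d : G := (g : G) with hdd
  have hmem : ∀ z ∈ Subgroup.closure ({x, y} : Set G), z ∈ zpowers d := by
    intro z hz
    obtain ⟨n, hn⟩ := mem_zpowers_iff.mp (hg ⟨z, hz⟩)
    refine ⟨n, ?_⟩
    have h := congr_arg (Subtype.val) hn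
    rw [SubgroupClass.coe_zpow] at h
    exact h
  have hxd : x ∈ zpowers d := hmem x (subset_closure (Set.mem_insert _ _))
  have hyd : y ∈ zpowers d := hmem y (subset_closure (Set.mem_insert_of_mem _ rfl))
  have had : a ∈ zpowers d := zpowers_le.mpr hxd hax
  have hdcent : d ∈ Subgroup.centralizer ({a} : Set G) := by
    rw [Subgroup.mem_centralizer_iff]
    rintro z rfl
    obtain ⟨n, hn⟩ := mem_zpowers_iff.mp had
    rw [← hn]
    exact ((Commute.refl d).zpow_right n).symm.eq
  obtain ⟨k, hk⟩ := hc ⟨d, hdcent⟩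
  have hdpow : d ^ p ^ k = 1 := by
    have := congr_arg (Subtype.val) hk
    push_cast at this
    exact this
  obtain ⟨k', _, hk'⟩ := (Nat.dvd_prime_pow hp).mp (orderOf_dvd_iff_pow_eq_one.mpr hdpow)
  exact lemA' hp hk' had hyd hao hy1

lemma isCyclic_zpowers'' {G : Type*} [Group G] (b : G) : IsCyclic ↥(zpowers b) := by
  refine ⟨⟨⟨b, mem_zpowers b⟩, fun x => ?_⟩⟩
  obtain ⟨n, hn⟩ := mem_zpowers_iff.mp x.2
  exact mem_zpowers_iff.mpr ⟨n, Subtype.ext (by rw [SubgroupClass.coe_zpow]; exact hn)⟩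

end Aux

theorem pGroup_centralizer_component
    {G : Type*} [Group G] [Fintype G] (p : ℕ) (hp : p.Prime)
    (a : G) (ha : orderOf a = p) (ha1 : a ≠ 1)
    (hc : IsPGroup p (Subgroup.centralizer ({a} : Set G))) :
    (∀ (b : G) (hb1 : b ≠ 1), b ≠ a →
        (cyclicGraph G).Reachable ⟨a, ha1⟩ ⟨b, hb1⟩ →
        IsCyclic ↥(Subgroup.closure ({a, b} : Set G))) ∧
    (∀ (b : G) (hb1 : b ≠ 1), orderOf b = p →
        (cyclicGraph G).Reachable ⟨a, ha1⟩ ⟨b, hb1⟩ →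
        b ∈ Subgroup.zpowers a ∧ b ≠ 1) := by
  have key : ∀ (u v : {g : G // g ≠ 1}), (cyclicGraph G).Walk u v →
      a ∈ Subgroup.zpowers (u : G) → a ∈ Subgroup.zpowers (v : G) := by
    intro u v w
    induction w with
    | nil => exact id
    | @cons u' v' w' hadj p ih =>
        intro hu
        exact ih (lemStep' hp ha hc v'.2 hu (show u' ≠ v' ∧ IsCyclic ↥(Subgroup.closure ({(u' : G), (v' : G)} : Set G)) from hadj).2)
  constructor
  · intro b hb1 _ hreach
    obtain ⟨w⟩ := hreach
    have hab : a ∈ Subgroup.zpowers b := key _ _ w (Subgroup.mem_zpowers a)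
    have hcl : Subgroup.closure ({a, b} : Set G) = Subgroup.zpowers b := by
      apply le_antisymm
      · rw [Subgroup.closure_le]
        rintro z (rfl | rfl)
        · exact hab
        · exact Subgroup.mem_zpowers z
      · exact Subgroup.zpowers_le.mpr
          (Subgroup.subset_closure (Set.mem_insert_of_mem _ rfl))
    rw [hcl]
    exact isCyclic_zpowers'' b
  · intro b hb1 hbo hreach
    obtain ⟨w⟩ := hreach
    have hab : a ∈ Subgroup.zpowers b := key _ _ w (Subgroup.mem_zpowers a)
    refine ⟨?_, hb1⟩
    have hle : Subgroup.zpowers a ≤ Subgroup.zpowers b := Subgroup.zpowers_le.mpr hab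
    have heq : Subgroup.zpowers a = Subgroup.zpowers b :=
      Subgroup.eq_of_le_of_card_ge hle
        (by rw [Nat.card_zpowers, Nat.card_zpowers, ha, hbo])
    rw [heq]
    exact Subgroup.mem_zpowers b
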